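/- arXiv:1810.04229 — 2 statements merged into one kernel-verified Lean document; each statement's English description precedes it below -/
import Mathlib

section
/- Assume additionally the stronger condition 2^(2^(m_k)) ≥ 2√|c_k| for all k, and that limsup_{k→∞} |c_k| = +∞. Then for every m ≥ 0 the m-th iterated Julia set J_m = Q_m(E) is pointwise thin (and hence hereditarily non uniformly perfect). -/
open Complex Metric Set Filter

/-- A round annulus {w : r < |w − z| < R} separates F: it is disjoint from F while
F meets both the closed disc D̄(z,r) and the set {w : |w − z| ≥ R}. -/
def SeparatesAnnulus (F : Set ℂ) (z : ℂ) (r R : ℝ) : Prop :=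
  (∀ w ∈ F, ¬(r < ‖w - z‖ ∧ ‖w - z‖ < R)) ∧
  (∃ w ∈ F, ‖w - z‖ ≤ r) ∧
  (∃ w ∈ F, R ≤ ‖w - z‖)

/-- F is pointwise thin: for each z ∈ F there are 0 < r_n < R_n with R_n → 0 and
R_n/r_n → ∞ such that each round annulus A(z, r_n, R_n) separates F. -/
def PointwiseThin (F : Set ℂ) : Prop :=
  ∀ z ∈ F, ∃ r R : ℕ → ℝ,
    (∀ n, 0 < r n ∧ r n < R n) ∧
    Filter.Tendsto R Filter.atTop (nhds 0) ∧
    Filter.Tendsto (fun n => R n / r n) Filter.atTop Filter.atTop ∧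
    ∀ n, SeparatesAnnulus F z (r n) (R n)

/-- E is hereditarily non uniformly perfect: no compact subset with at least two
points admits a finite upper bound on the moduli of separating round annuli. -/
def HNUP (E : Set ℂ) : Prop :=
  ∀ F ⊆ E, IsCompact F → (∃ a ∈ F, ∃ b ∈ F, a ≠ b) →
    ∀ C > 0, ∃ (z : ℂ) (r R : ℝ), 0 < r ∧ r < R ∧ C < Real.log (R / r) ∧
      SeparatesAnnulus F z r R

lemma pow_remainder (u : ℂ) : ∀ N : ℕ, (N:ℝ) * ‖u‖ ≤ 1 →
    ‖(1+u)^N - 1 - N*u‖ ≤ ((N:ℝ) * ‖u‖)^2 := by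
  intro N
  induction N with
  | zero => intro _; simp
  | succ N ih =>
    intro h
    have hNa : (0:ℝ) ≤ (N:ℝ) * ‖u‖ :=
      mul_nonneg (Nat.cast_nonneg N) (norm_nonneg u)
    have hN : (N:ℝ) * ‖u‖ ≤ 1 := by
      push_cast at h
      nlinarith [norm_nonneg u]
    have key : (1+u)^(N+1) - 1 - ((N:ℂ)+1)*u = ((1+u)^N - 1 - N*u)*(1+u) + N*u^2 := by
      ring
    have habs1 : ‖1+u‖ ≤ 1 + ‖u‖ := by
      calc ‖1+u‖ ≤ ‖1‖ + ‖u‖ := norm_add_le _ _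
        _ = 1 + ‖u‖ := by simp
    calc ‖(1+u)^(N+1) - 1 - ((N+1:ℕ):ℂ)*u‖
        = ‖((1+u)^N - 1 - N*u)*(1+u) + (N:ℂ)*u^2‖ := by push_cast; rw [key]
      _ ≤ ‖((1+u)^N - 1 - N*u)*(1+u)‖ + ‖(N:ℂ)*u^2‖ :=
          norm_add_le _ _
      _ = ‖(1+u)^N - 1 - N*u‖ * ‖1+u‖
          + (N:ℝ) * (‖u‖)^2 := by
          rw [norm_mul, norm_mul, norm_pow, Complex.norm_natCast]
      _ ≤ ((N:ℝ)*‖u‖)^2 * (1 + ‖u‖) + (N:ℝ)*(‖u‖)^2 := by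
          exact add_le_add (mul_le_mul (ih hN) habs1 (norm_nonneg _) (sq_nonneg _)) le_rfl
      _ ≤ (((N+1:ℕ):ℝ)*‖u‖)^2 := by
          push_cast
          nlinarith [norm_nonneg u, Nat.cast_nonneg (α := ℝ) N, hN,
            mul_le_mul_of_nonneg_right hN
              (mul_nonneg (mul_nonneg (Nat.cast_nonneg (α := ℝ) N) (norm_nonneg u)) (norm_nonneg u))]

set_option maxHeartbeats 1000000 in
lemma key_lemma (Z V : ℕ → ℂ) (m n N : ℕ) (cc : ℝ)
    (hmn : m ≤ n)
    (hdiff : ∀ j, V (j+1) - Z (j+1) = (V j - Z j) * (V j + Z j))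
    (hZ1 : ∀ j, 1 ≤ ‖Z j‖)
    (hZn2 : ‖Z n‖ ≤ 2)
    (hN : 4 ≤ (N:ℝ))
    (hcc : 400 ≤ cc)
    (hZN : cc - 2 ≤ ‖Z n‖ ^ N)
    (hVZN : ‖V n ^ N - Z n ^ N‖ ≤ 4)
    (hDm : ‖V m - Z m‖
      < ‖Z n‖ / (16 * N * ∏ i ∈ Finset.Ico m n, (2 * ‖Z i‖))) :
    ‖V m - Z m‖
      ≤ 7 * ‖Z n‖ / ((N * (cc - 2)) * ∏ i ∈ Finset.Ico m n, (2 * ‖Z i‖)) := by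
  have hNpos : (0:ℝ) < N := by linarith
  set A : ℕ → ℝ := fun j => ∏ i ∈ Finset.Ico m j, (2 * ‖Z i‖) with hAdef
  set D : ℕ → ℝ := fun j => ‖V j - Z j‖ with hDdef
  set B : ℕ → ℝ := fun j => ∑ i ∈ Finset.Ico m j, ((2:ℝ)^i / (4 * N * 2^n)) with hBdef
  set β : ℕ → ℝ := fun i => (2:ℝ)^i / (4 * N * 2^n) with hβdef
  have hβpos : ∀ i, 0 < β i := by
    intro i
    apply div_pos (by positivity) (by positivity)
  have habs_sub : ∀ x y : ℂ, ‖x - y‖ ≤ ‖x‖ + ‖y‖ :=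
    fun x y => norm_sub_le x y
  have hApos : ∀ j, 0 < A j := by
    intro j
    apply Finset.prod_pos
    intro i _
    have := hZ1 i; linarith
  have hDnn : ∀ j, 0 ≤ D j := fun j => norm_nonneg _
  have hA_succ : ∀ j, m ≤ j → A (j+1) = A j * (2 * ‖Z j‖) := by
    intro j hj
    exact Finset.prod_Ico_succ_top hj _
  have hB_succ : ∀ j, m ≤ j → B (j+1) = B j + β j := by
    intro j hj
    exact Finset.sum_Ico_succ_top hj _
  have hBnn : ∀ j, 0 ≤ B j := by
    intro j
    apply Finset.sum_nonneg
    intro i _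
    exact (hβpos i).le
  have hB_le : ∀ j, j ≤ n → B j ≤ 1 / (4*N) := by
    intro j hj
    have h1 : ∑ i ∈ Finset.Ico m j, (2:ℝ)^i ≤ 2^n := by
      calc ∑ i ∈ Finset.Ico m j, (2:ℝ)^i ≤ ∑ i ∈ Finset.range j, (2:ℝ)^i := by
            apply Finset.sum_le_sum_of_subset_of_nonneg
            · intro i hi
              simp only [Finset.mem_Ico] at hi
              simp [hi.2]
            · intro i _ _; positivity
        _ = 2^j - 1 := by
            rw [geom_sum_eq (by norm_num)]
            norm_num
        _ ≤ 2^n := by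
            have : (2:ℝ)^j ≤ 2^n := pow_le_pow_right₀ (by norm_num) hj
            linarith
    have h2 : B j = (∑ i ∈ Finset.Ico m j, (2:ℝ)^i) / (4*N*2^n) := by
      rw [hBdef, Finset.sum_div]
    rw [h2, div_le_div_iff₀ (by positivity) (by positivity)]
    calc (∑ i ∈ Finset.Ico m j, (2:ℝ)^i) * (4*N) ≤ 2^n * (4*N) := by
          apply mul_le_mul_of_nonneg_right h1 (by positivity)
      _ = 1 * (4*N*2^n) := by ring
  have hB16 : ∀ j, j ≤ n → B j ≤ 1/16 := by
    intro j hj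
    calc B j ≤ 1/(4*N) := hB_le j hj
      _ ≤ 1/16 := by
        rw [div_le_div_iff₀ (by positivity) (by norm_num)]
        linarith
  have hβ_le : ∀ j, j ≤ n → β j ≤ 1/16 := by
    intro j hj
    have h2j : (2:ℝ)^j ≤ 2^n := pow_le_pow_right₀ (by norm_num) hj
    rw [hβdef]
    simp only
    rw [div_le_div_iff₀ (by positivity) (by norm_num)]
    nlinarith [pow_pos (show (0:ℝ) < 2 by norm_num) n]
  have hAn_ratio : ∀ j, m ≤ j → j ≤ n → A j * 2^(n-j) ≤ A n := by
    intro j hj hjn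
    have hsplit : A j * (∏ i ∈ Finset.Ico j n, (2 * ‖Z i‖)) = A n :=
      Finset.prod_Ico_consecutive _ hj hjn
    have hge : (2:ℝ)^(n-j) ≤ ∏ i ∈ Finset.Ico j n, (2 * ‖Z i‖) := by
      calc (2:ℝ)^(n-j) = ∏ _i ∈ Finset.Ico j n, (2:ℝ) := by
            rw [Finset.prod_const, Nat.card_Ico]
        _ ≤ ∏ i ∈ Finset.Ico j n, (2 * ‖Z i‖) := by
            apply Finset.prod_le_prod
            · intro i _; norm_num
            · intro i _; have := hZ1 i; nlinarith
    calc A j * 2^(n-j) ≤ A j * (∏ i ∈ Finset.Ico j n, (2 * ‖Z i‖)) := by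
          apply mul_le_mul_of_nonneg_left hge (hApos j).le
      _ = A n := hsplit
  -- main induction
  have hDm' : D m * (16 * N * A n) ≤ ‖Z n‖ := by
    have hp : (0:ℝ) < 16 * N * A n := by
      have := hApos n
      positivity
    have := (lt_div_iff₀ hp).mp hDm
    linarith
  have IND : ∀ j, m ≤ j → j ≤ n →
      D j ≤ D m * A j * (1 + 2 * B j) ∧ D m * A j * (1 - 2 * B j) ≤ D j := by
    intro j hj
    induction j, hj using Nat.le_induction with
    | base =>
      intro _
      have hAm : A m = 1 := by rw [hAdef]; simp
      have hBm : B m = 0 := by rw [hBdef]; simp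
      rw [hAm, hBm]
      norm_num
    | succ j hj ih =>
      intro hj1n
      have hjn : j ≤ n := Nat.le_of_succ_le hj1n
      obtain ⟨IH1, IH2⟩ := ih hjn
      have hBj := hB16 j hjn
      have hβj := hβ_le j hjn
      have hZj1 := hZ1 j
      have hDmAj : (0:ℝ) ≤ D m * A j := mul_nonneg (hDnn m) (hApos j).le
      -- epsilon bound : D j ≤ β j * |Z j|
      have hεj : D j ≤ β j * ‖Z j‖ := by
        have hβnn := (hβpos j).le
        suffices hs : D j ≤ β j by nlinarith
        have hgoal : D j * (4*N*2^n) ≤ 2^j := by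
          have f1 : D j ≤ D m * A j * (9/8) := by nlinarith [hBnn j]
          have f3 : A j * 2^(n-j) ≤ A n := hAn_ratio j hj hjn
          have f4 : (2:ℝ)^(n-j) * 2^j = 2^n := by
            rw [← pow_add]
            congr 1
            omega
          calc D j * (4*N*2^n) ≤ (D m * A j * (9/8)) * (4*N*2^n) := by
                apply mul_le_mul_of_nonneg_right f1 (by positivity)
            _ = (9/2) * (D m * N) * (A j * 2^(n-j) * 2^j) := by rw [← f4]; ring
            _ ≤ (9/2) * (D m * N) * (A n * 2^j) := by
                apply mul_le_mul_of_nonneg_left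
                · apply mul_le_mul_of_nonneg_right f3 (by positivity)
                · exact mul_nonneg (by norm_num) (mul_nonneg (hDnn m) hNpos.le)
            _ = (9/32) * (D m * (16 * N * A n)) * 2^j := by ring
            _ ≤ (9/32) * ‖Z n‖ * 2^j := by
                apply mul_le_mul_of_nonneg_right _ (by positivity)
                apply mul_le_mul_of_nonneg_left hDm' (by norm_num)
            _ ≤ (9/32) * 2 * 2^j := by
                apply mul_le_mul_of_nonneg_right _ (by positivity)
                apply mul_le_mul_of_nonneg_left hZn2 (by norm_num)
            _ ≤ 2^j := by nlinarith [pow_pos (show (0:ℝ) < 2 by norm_num) j]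
        rw [hβdef]
        simp only
        rw [le_div_iff₀ (by positivity)]
        exact hgoal
      have hsum : V j + Z j = 2*Z j + (V j - Z j) := by ring
      have habs2Z : ‖2*Z j‖ = 2 * ‖Z j‖ := by
        rw [norm_mul, Complex.norm_two]
      have habs_up : ‖V j + Z j‖ ≤ 2*‖Z j‖ + D j := by
        calc ‖V j + Z j‖ = ‖2*Z j + (V j - Z j)‖ := by rw [← hsum]
          _ ≤ ‖2*Z j‖ + ‖V j - Z j‖ := norm_add_le _ _
          _ = 2*‖Z j‖ + D j := by rw [habs2Z]
      have habs_lo : 2*‖Z j‖ - D j ≤ ‖V j + Z j‖ := by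
        have h1 : (2:ℂ)*Z j = (V j + Z j) - (V j - Z j) := by ring
        have h2 : ‖2*Z j‖ ≤ ‖V j + Z j‖ + ‖V j - Z j‖ := by
          rw [h1]
          exact habs_sub _ _
        rw [habs2Z] at h2
        linarith
      have hrec : D (j+1) = D j * ‖V j + Z j‖ := by
        show ‖V (j+1) - Z (j+1)‖ = _
        rw [hdiff j, norm_mul]
      constructor
      · calc D (j+1) = D j * ‖V j + Z j‖ := hrec
          _ ≤ (D m * A j * (1 + 2*B j)) * (2*‖Z j‖ + β j * ‖Z j‖) := by
              apply mul_le_mul IH1 _ (norm_nonneg _)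
                (mul_nonneg (mul_nonneg (hDnn m) (hApos j).le) (by linarith [hBnn j]))
              linarith [habs_up, hεj]
          _ = (D m * (A j * (2 * ‖Z j‖))) * ((1 + 2*B j) * (1 + β j/2)) := by ring
          _ ≤ (D m * (A j * (2 * ‖Z j‖))) * (1 + 2*B (j+1)) := by
              refine mul_le_mul_of_nonneg_left ?_
                (mul_nonneg (hDnn m) (mul_nonneg (hApos j).le (by positivity)))
              rw [hB_succ j hj]
              nlinarith [hBnn j, (hβpos j).le]
          _ = D m * A (j+1) * (1 + 2*B (j+1)) := by rw [hA_succ j hj]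
      · have hstep_lo : 2*‖Z j‖ * (1 - β j/2) ≤ ‖V j + Z j‖ := by
          have : 2*‖Z j‖ * (1 - β j/2) = 2*‖Z j‖ - β j * ‖Z j‖ := by ring
          rw [this]
          linarith [habs_lo, hεj]
        calc D m * A (j+1) * (1 - 2*B (j+1))
            = (D m * (A j * (2 * ‖Z j‖))) * (1 - 2*B j - 2*β j) := by
              rw [hA_succ j hj, hB_succ j hj]; ring
          _ ≤ (D m * (A j * (2 * ‖Z j‖))) * ((1 - 2*B j) * (1 - β j/2)) := by
              refine mul_le_mul_of_nonneg_left ?_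
                (mul_nonneg (hDnn m) (mul_nonneg (hApos j).le (by positivity)))
              nlinarith [hBnn j, (hβpos j).le]
          _ = (D m * A j * (1 - 2*B j)) * (2*‖Z j‖ * (1 - β j/2)) := by ring
          _ ≤ D j * ‖V j + Z j‖ := by
              apply mul_le_mul IH2 hstep_lo
                (mul_nonneg (by linarith) (by linarith [(hβpos j).le]))
                (hDnn j)
          _ = D (j+1) := hrec.symm
  obtain ⟨Hup, Hlo⟩ := IND n hmn le_rfl
  have hBn := hB16 n le_rfl
  set zn := ‖Z n‖ with hzn
  have hzn1 : 1 ≤ zn := hZ1 n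
  have hznpos : (0:ℝ) < zn := by linarith
  have hZnne : Z n ≠ 0 := by
    intro h
    rw [hzn, h] at hzn1
    simp at hzn1
    linarith
  have hXnn : (0:ℝ) ≤ D m * A n := mul_nonneg (hDnn m) (hApos n).le
  have hDn_up : D n ≤ (9/8) * (D m * A n) := by
    have h := mul_le_mul_of_nonneg_left (show 1 + 2*B n ≤ 9/8 by linarith) hXnn
    calc D n ≤ D m * A n * (1 + 2*B n) := Hup
      _ = (D m * A n) * (1 + 2*B n) := by ring
      _ ≤ (D m * A n) * (9/8) := h
      _ = (9/8) * (D m * A n) := by ring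
  have hDn_lo : (7/8) * (D m * A n) ≤ D n := by
    have h := mul_le_mul_of_nonneg_left (show 7/8 ≤ 1 - 2*B n by linarith) hXnn
    calc (7/8) * (D m * A n) = (D m * A n) * (7/8) := by ring
      _ ≤ (D m * A n) * (1 - 2*B n) := h
      _ = D m * A n * (1 - 2*B n) := by ring
      _ ≤ D n := Hlo
  set u : ℂ := (V n - Z n) / Z n with hu
  have hu_abs : ‖u‖ = D n / zn := by
    rw [hu, norm_div]
  have hDn_eq : D n = ‖u‖ * zn := by
    rw [hu_abs]
    field_simp
  have hVn_eq : V n = Z n * (1 + u) := by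
    rw [hu]
    field_simp
    ring
  have hNu : (N:ℝ) * ‖u‖ ≤ 1/4 := by
    have h1 : (N:ℝ) * D n ≤ (9/128) * zn := by
      calc (N:ℝ) * D n ≤ (N:ℝ) * ((9/8) * (D m * A n)) := by
            apply mul_le_mul_of_nonneg_left hDn_up hNpos.le
        _ = (9/128) * (D m * (16 * N * A n)) := by ring
        _ ≤ (9/128) * zn := by
            apply mul_le_mul_of_nonneg_left hDm' (by norm_num)
    rw [hu_abs, ← mul_div_assoc, div_le_iff₀ hznpos]
    calc (N:ℝ) * D n ≤ (9/128) * zn := h1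
      _ ≤ 1/4 * zn := by linarith
  have hrem := pow_remainder u N (by linarith)
  have habsNu : ‖(N:ℂ)*u‖ = (N:ℝ) * ‖u‖ := by
    rw [norm_mul, Complex.norm_natCast]
  have hlow : (3/4) * ((N:ℝ) * ‖u‖) ≤ ‖(1+u)^N - 1‖ := by
    have hsplit : (1+u)^N - 1 = (N:ℂ)*u + ((1+u)^N - 1 - N*u) := by ring
    have h1 : ‖(N:ℂ)*u‖ ≤ ‖(1+u)^N - 1‖ + ‖(1+u)^N - 1 - N*u‖ := by
      calc ‖(N:ℂ)*u‖ = ‖((1+u)^N - 1) - ((1+u)^N - 1 - N*u)‖ := by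
            congr 1; ring
        _ ≤ _ := habs_sub _ _
    rw [habsNu] at h1
    nlinarith [norm_nonneg u, mul_nonneg (Nat.cast_nonneg (α := ℝ) N) (norm_nonneg u)]
  have hVZn_eq : V n ^ N - Z n ^ N = Z n ^ N * ((1+u)^N - 1) := by
    rw [hVn_eq, mul_pow]
    ring
  have hmain4 : (cc - 2) * ((3/4) * ((N:ℝ) * ‖u‖)) ≤ 4 := by
    calc (cc - 2) * ((3/4) * ((N:ℝ) * ‖u‖))
        ≤ (‖Z n‖ ^ N) * ‖(1+u)^N - 1‖ := by
          apply mul_le_mul hZN hlow (by positivity) (by positivity)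
      _ = ‖V n ^ N - Z n ^ N‖ := by
          rw [hVZn_eq, norm_mul, norm_pow]
      _ ≤ 4 := hVZN
  have hfin1 : (N:ℝ) * (cc - 2) * D n ≤ (16/3) * zn := by
    rw [hDn_eq]
    nlinarith [hmain4, hznpos, norm_nonneg u]
  have hfin2 : D m * A n ≤ (8/7) * D n := by linarith
  have hccpos : (0:ℝ) < cc - 2 := by linarith
  show D m ≤ 7 * zn / ((N * (cc-2)) * A n)
  rw [le_div_iff₀ (mul_pos (mul_pos hNpos hccpos) (hApos n))]
  have hstep1 : D m * (N * (cc - 2) * A n) = (D m * A n) * (N * (cc - 2)) := by ring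
  nlinarith [mul_le_mul_of_nonneg_right hfin2 (by positivity : (0:ℝ) ≤ (N:ℝ) * (cc-2)),
    hfin1, hznpos]

set_option maxHeartbeats 4000000 in
/-- Under the stronger condition 2^(2^(m_k)) ≥ 2√|c_k| and
limsup |c_k| = +∞, every iterated Julia set J_m = Q_m(E) is pointwise thin
(and hence hereditarily non uniformly perfect). -/
theorem stmt_16
    (c : ℕ → ℂ) (msq : ℕ → ℕ)
    (hc : ∀ k, 1 ≤ k → 4 < ‖c k‖)
    (hmsq : ∀ k, 1 ≤ k → 1 ≤ msq k)
    (hinv : ∀ k, 1 ≤ k → 2 * Real.sqrt (‖c k‖) ≤ (2 : ℝ) ^ 2 ^ msq k)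
    (M : ℕ → ℕ) (hM0 : M 0 = 0)
    (hMs : ∀ k, M (k + 1) = M k + (msq (k + 1) + 1))
    (P : ℕ → ℂ → ℂ)
    (hP1 : ∀ k, 1 ≤ k → ∀ z, P (M k) z = z ^ 2 + c k)
    (hP2 : ∀ n, (∀ k, 1 ≤ k → M k ≠ n) → ∀ z, P n z = z ^ 2)
    (Q : ℕ → ℕ → ℂ → ℂ)
    (hQ0 : ∀ n z, Q n n z = z)
    (hQs : ∀ a n z, a ≤ n → Q a (n + 1) z = P (n + 1) (Q a n z))
    (S : ℕ → Set ℂ)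
    (hS : ∀ k, S k = {z : ℂ | ‖Q 0 (M k) z‖ ≤ 2})
    (E : Set ℂ) (hE : E = ⋂ k, ⋂ (_ : 1 ≤ k), S k)
    (hub : ∀ C : ℝ, ∃ k, 1 ≤ k ∧ C < ‖c k‖) :
    ∀ m : ℕ, PointwiseThin (Q 0 m '' E) ∧ HNUP (Q 0 m '' E) := by
  intro m
  -- ## basic facts about M
  have hMlt : ∀ l, M l < M (l+1) := by
    intro l; rw [hMs l]; omega
  have hMmono : StrictMono M := strictMono_nat_of_lt_succ hMlt
  have hM2l : ∀ l, 2*l ≤ M l := by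
    intro l
    induction l with
    | zero => omega
    | succ l ih =>
      have h1 := hmsq (l+1) (by omega)
      rw [hMs l]; omega
  have hnotc : ∀ l t, M l < t → t < M (l+1) → ∀ k, 1 ≤ k → M k ≠ t := by
    intro l t h1 h2 k hk he
    rw [← he] at h1 h2
    have e1 : l < k := hMmono.lt_iff_lt.mp h1
    have e2 : k < l + 1 := hMmono.lt_iff_lt.mp h2
    omega
  -- ## step structure of Q
  have hQstep : ∀ j, ∃ d : ℂ, ∀ a (y : ℂ), a ≤ j → Q a (j+1) y = (Q a j y)^2 + d := by
    intro j
    by_cases h : ∃ k, 1 ≤ k ∧ M k = j+1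
    · obtain ⟨k, hk, hMk⟩ := h
      exact ⟨c k, fun a y ha => by rw [hQs a j y ha, ← hMk, hP1 k hk]⟩
    · push_neg at h
      exact ⟨0, fun a y ha => by
        rw [hQs a j y ha, hP2 (j+1) (fun k hk => h k hk), add_zero]⟩
  have hcomp : ∀ a b, a ≤ b → ∀ nn, b ≤ nn → ∀ x : ℂ, Q b nn (Q a b x) = Q a nn x := by
    intro a b hab nn hbnn x
    induction nn, hbnn using Nat.le_induction with
    | base => rw [hQ0]
    | succ nn hnn ih => rw [hQs b nn _ hnn, ih, hQs a nn x (hab.trans hnn)]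
  have hpowQ : ∀ a j, a ≤ j → (∀ t, a < t → t ≤ j → ∀ k, 1 ≤ k → M k ≠ t) →
      ∀ x : ℂ, Q a j x = x^(2^(j-a)) := by
    intro a j haj
    induction j, haj using Nat.le_induction with
    | base => intro _ x; simp [hQ0]
    | succ j haj ih =>
      intro hnc x
      have h1 : Q a (j+1) x = P (j+1) (Q a j x) := hQs a j x haj
      have h2 : P (j+1) (Q a j x) = (Q a j x)^2 :=
        hP2 (j+1) (fun k hk => hnc (j+1) (by omega) le_rfl k hk) _
      have h3 : Q a j x = x ^ (2^(j-a)) :=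
        ih (fun t ht1 ht2 => hnc t ht1 (ht2.trans (Nat.le_succ j))) x
      rw [h1, h2, h3, ← pow_mul]
      congr 1
      have : j + 1 - a = (j - a) + 1 := by omega
      rw [this, pow_succ]
  have hblockdec : ∀ j, ∃ l, M l ≤ j ∧ j < M (l+1) := by
    intro j
    induction j with
    | zero =>
      refine ⟨0, by omega, ?_⟩
      have := hMlt 0
      omega
    | succ j ih =>
      obtain ⟨l, h1, h2⟩ := ih
      by_cases h : j+1 < M (l+1)
      · exact ⟨l, by omega, h⟩
      · have he : j + 1 = M (l+1) := by omega
        refine ⟨l+1, by omega, ?_⟩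
        have := hMlt (l+1)
        omega
  have hblockQ : ∀ l (y : ℂ), Q (M l) (M (l+1)) y = (y ^ (2 ^ msq (l+1)))^2 + c (l+1) := by
    intro l y
    have h1 : M (l+1) = (M l + msq (l+1)) + 1 := by rw [hMs l]; omega
    have h2 : M l ≤ M l + msq (l+1) := by omega
    have h3 : Q (M l) (M l + msq (l+1)) y = y ^ (2 ^ msq (l+1)) := by
      have := hpowQ (M l) (M l + msq (l+1)) h2
        (fun t ht1 ht2 k hk => hnotc l t ht1 (by omega) k hk) y
      rw [this]
      congr 2
      omega
    have h4 : Q (M l) (M (l+1)) y = P (M (l+1)) (Q (M l) (M l + msq (l+1)) y) := by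
      conv_lhs => rw [h1]
      rw [hQs _ _ _ h2, ← h1]
    rw [h4, h3, hP1 (l+1) (by omega)]
  have hpreQ : ∀ (x : ℂ) (l : ℕ),
      (Q 0 (M l) x)^(2^(msq (l+1)+1)) = Q 0 (M (l+1)) x - c (l+1) := by
    intro x l
    have h := hblockQ l (Q 0 (M l) x)
    rw [hcomp 0 (M l) (Nat.zero_le _) (M (l+1)) (hMlt l).le x] at h
    have e : (Q 0 (M l) x)^(2^(msq (l+1)+1)) = ((Q 0 (M l) x)^(2^(msq (l+1))))^2 := by
      rw [← pow_mul, pow_succ]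
    rw [e, h]
    ring
  -- helper: real pow bounds
  have hple2 : ∀ (y : ℝ) (K : ℕ), K ≠ 0 → 0 ≤ y → y^K ≤ 2^K → y ≤ 2 := by
    intro y K hK hy h
    by_contra hgt
    push_neg at hgt
    have : (2:ℝ)^K < y^K := pow_lt_pow_left₀ hgt (by norm_num) hK
    linarith
  have hpge1 : ∀ (y : ℝ) (K : ℕ), 0 ≤ y → 2 ≤ y^K → 1 ≤ y := by
    intro y K hy h
    by_contra hlt
    push_neg at hlt
    have : y^K ≤ 1 := by
      apply pow_le_one₀ hy hlt.le
    linarith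
  have hc4 : ∀ k, 1 ≤ k → ‖c k‖ + 2 ≤ (2:ℝ) ^ (2 ^ (msq k + 1)) := by
    intro k hk
    have h1 := hinv k hk
    have h2 := hc k hk
    have h3 : (2:ℝ) ^ (2 ^ (msq k + 1)) = ((2:ℝ) ^ (2 ^ msq k))^2 := by
      rw [← pow_mul, pow_succ]
    rw [h3]
    have h4 : Real.sqrt (‖c k‖) ^ 2 = ‖c k‖ :=
      Real.sq_sqrt (norm_nonneg _)
    nlinarith [Real.sqrt_nonneg (‖c k‖), pow_pos (show (0:ℝ) < 2 by norm_num) (2 ^ msq k)]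
  -- ## orbit facts for points of E
  have hEchar : ∀ x : ℂ, x ∈ E ↔ ∀ k, 1 ≤ k → ‖Q 0 (M k) x‖ ≤ 2 := by
    intro x
    rw [hE]
    simp only [Set.mem_iInter]
    constructor
    · intro h k hk
      have := h k hk
      rw [hS k] at this
      exact this
    · intro h k hk
      rw [hS k]
      exact h k hk
  have hOrb : ∀ x : ℂ, (∀ k, 1 ≤ k → ‖Q 0 (M k) x‖ ≤ 2) →
      (∀ l, ‖Q 0 (M l) x‖ ≤ 2) ∧ (∀ j, 1 ≤ ‖Q 0 j x‖) := by
    intro x hx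
    have habs_le : ∀ l, ‖Q 0 (M l) x‖ ≤ 2 := by
      intro l
      have h1 : ‖Q 0 (M l) x‖ ^ (2^(msq (l+1)+1))
          ≤ ‖c (l+1)‖ + 2 := by
        rw [← norm_pow, hpreQ x l]
        calc ‖Q 0 (M (l+1)) x - c (l+1)‖
            ≤ ‖Q 0 (M (l+1)) x‖ + ‖c (l+1)‖ :=
              norm_sub_le _ _
          _ ≤ ‖c (l+1)‖ + 2 := by
              have := hx (l+1) (by omega); linarith
      have h2 := hc4 (l+1) (by omega)
      exact hple2 _ _ (pow_ne_zero _ two_ne_zero) (norm_nonneg _) (by linarith)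
    have habs_ge : ∀ l, 1 ≤ ‖Q 0 (M l) x‖ := by
      intro l
      have h1 : 2 ≤ ‖Q 0 (M l) x‖ ^ (2^(msq (l+1)+1)) := by
        rw [← norm_pow, hpreQ x l]
        have h2 : ‖c (l+1)‖
            ≤ ‖Q 0 (M (l+1)) x‖ + ‖Q 0 (M (l+1)) x - c (l+1)‖ := by
          calc ‖c (l+1)‖
              = ‖Q 0 (M (l+1)) x - (Q 0 (M (l+1)) x - c (l+1))‖ := by congr 1; ring
            _ ≤ _ := norm_sub_le _ _
        have h3 := hc (l+1) (by omega)
        have h4 := hx (l+1) (by omega)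
        linarith
      exact hpge1 _ _ (norm_nonneg _) h1
    refine ⟨habs_le, ?_⟩
    intro j
    obtain ⟨l, h1, h2⟩ := hblockdec j
    have h3 : Q 0 j x = (Q 0 (M l) x)^(2^(j - M l)) := by
      rw [← hcomp 0 (M l) (Nat.zero_le _) j h1 x]
      exact hpowQ (M l) j h1 (fun t ht1 ht2 k hk => hnotc l t ht1 (lt_of_le_of_lt ht2 h2) k hk) _
    rw [h3, norm_pow]
    calc (1:ℝ) = 1^(2^(j - M l)) := by rw [one_pow]
      _ ≤ _ := pow_le_pow_left₀ (by norm_num) (habs_ge l) _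
  -- ## square roots exist
  have hroot : ∀ (w : ℂ) (K : ℕ), K ≠ 0 → ∃ s : ℂ, s ^ K = w := by
    intro w K hK
    rcases IsAlgClosed.exists_pow_nat_eq w (Nat.pos_of_ne_zero hK) with ⟨s, hs⟩
    exact ⟨s, hs⟩
  -- ## the flip construction : for any ζ ∈ E and t, there is ξ' ∈ E whose orbit
  -- at time t is the negative of that of ζ
  have hflip : ∀ (ζ : ℂ), (∀ k, 1 ≤ k → ‖Q 0 (M k) ζ‖ ≤ 2) →
      ∀ t : ℕ, ∃ x : ℂ, x ∈ E ∧ Q 0 t x = -(Q 0 t ζ) := by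
    intro ζ hζ t
    obtain ⟨hζle, hζge⟩ := hOrb ζ hζ
    obtain ⟨lt_, hlt1, hlt2⟩ := hblockdec t
    -- top root
    obtain ⟨x₁, hx₁⟩ := hroot (-(Q 0 t ζ)) (2^(t - M lt_)) (pow_ne_zero _ two_ne_zero)
    have hQpow : ∀ y : ℂ, Q (M lt_) t y = y ^ (2^(t - M lt_)) :=
      fun y => hpowQ (M lt_) t hlt1
        (fun t' ht1 ht2 k hk => hnotc lt_ t' ht1 (lt_of_le_of_lt ht2 hlt2) k hk) y
    have hQx₁ : Q (M lt_) t x₁ = -(Q 0 t ζ) := by rw [hQpow x₁, hx₁]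
    have hx₁abs : ‖x₁‖ ≤ 2 := by
      have e1 : ‖x₁‖ ^ (2^(t - M lt_)) = ‖Q 0 t ζ‖ := by
        rw [← norm_pow, hx₁, norm_neg]
      have e2 : ‖Q 0 t ζ‖ = ‖Q 0 (M lt_) ζ‖ ^ (2^(t - M lt_)) := by
        rw [← hcomp 0 (M lt_) (Nat.zero_le _) t hlt1 ζ, hQpow, norm_pow]
      have e3 : ‖x₁‖ ^ (2^(t - M lt_)) ≤ (2:ℝ) ^ (2^(t - M lt_)) := by
        rw [e1, e2]
        exact pow_le_pow_left₀ (norm_nonneg _) (hζle lt_) _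
      exact hple2 _ _ (pow_ne_zero _ two_ne_zero) (norm_nonneg _) e3
    -- going down block by block
    have hdown : ∀ s : ℕ, s ≤ lt_ → ∃ x : ℂ, Q (M (lt_ - s)) t x = -(Q 0 t ζ) ∧
        ‖x‖ ≤ 2 ∧
        ∀ l', lt_ - s ≤ l' → l' ≤ lt_ → ‖Q (M (lt_ - s)) (M l') x‖ ≤ 2 := by
      intro s
      induction s with
      | zero =>
        intro _
        simp only [Nat.sub_zero]
        refine ⟨x₁, hQx₁, hx₁abs, ?_⟩
        intro l' h1 h2
        have : l' = lt_ := le_antisymm h2 h1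
        subst this
        rw [hQ0]
        exact hx₁abs
      | succ s ih =>
        intro hs1
        obtain ⟨x, hx1, hx2, hx3⟩ := ih (by omega)
        have hll : lt_ - s = (lt_ - (s+1)) + 1 := by omega
        set l := lt_ - (s+1) with hldef
        have hl1 : 1 ≤ l + 1 := by omega
        -- build preimage of x through block l+1
        obtain ⟨v, hv⟩ := hroot (x - c (l+1)) 2 two_ne_zero
        obtain ⟨x', hx'⟩ := hroot v (2^(msq (l+1))) (pow_ne_zero _ two_ne_zero)
        have hQx' : Q (M l) (M (l+1)) x' = x := by
          rw [hblockQ l x', hx', hv]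
          ring
        have hx'abs : ‖x'‖ ≤ 2 := by
          have e1 : ‖x'‖ ^ (2^(msq (l+1) + 1)) = ‖x - c (l+1)‖ := by
            rw [← norm_pow, ← hv, ← hx', ← pow_mul, pow_succ]
          have e2 : ‖x - c (l+1)‖ ≤ ‖c (l+1)‖ + 2 := by
            calc ‖x - c (l+1)‖ ≤ ‖x‖ + ‖c (l+1)‖ :=
                norm_sub_le _ _
              _ ≤ ‖c (l+1)‖ + 2 := by linarith
          have e3 := hc4 (l+1) hl1
          exact hple2 _ _ (pow_ne_zero _ two_ne_zero) (norm_nonneg _)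
            (by rw [e1]; linarith)
        rw [hll] at hx1 hx3
        refine ⟨x', ?_, hx'abs, ?_⟩
        · rw [← hcomp (M l) (M (l+1)) (hMlt l).le t
            (le_trans (hMmono.monotone (by omega : l + 1 ≤ lt_)) hlt1) x', hQx']
          exact hx1
        · intro l' h1 h2
          by_cases hl' : l' = l
          · subst hl'
            rw [hQ0]
            exact hx'abs
          · have h1' : l + 1 ≤ l' := by omega
            rw [← hcomp (M l) (M (l+1)) (hMlt l).le (M l')
              (hMmono.monotone h1') x', hQx']
            exact hx3 l' h1' h2
    obtain ⟨x₀, hx₀1, hx₀2, hx₀3⟩ := hdown lt_ le_rfl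
    rw [Nat.sub_self, hM0] at hx₀1 hx₀3
    have hMkt : ∀ k, lt_ < k → t < M k := by
      intro k hk
      calc t < M (lt_ + 1) := hlt2
        _ ≤ M k := hMmono.monotone (by omega)
    have hneg : ∀ s, t + 1 ≤ s → ∀ y : ℂ, Q t s (-y) = Q t s y := by
      intro s hs
      induction s, hs using Nat.le_induction with
      | base =>
        intro y
        obtain ⟨d, hd⟩ := hQstep t
        rw [hd t _ le_rfl, hd t _ le_rfl, hQ0, hQ0]
        ring
      | succ s hs ih =>
        intro y
        rw [hQs t s _ (by omega), hQs t s _ (by omega), ih y]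
    refine ⟨x₀, ?_, hx₀1⟩
    rw [hEchar]
    intro k hk
    by_cases hkl : k ≤ lt_
    · exact hx₀3 k (by omega) hkl
    · have htk : t < M k := hMkt k (by omega)
      rw [← hcomp 0 t (Nat.zero_le _) (M k) htk.le x₀, hx₀1,
        hneg (M k) (by omega) (Q 0 t ζ),
        hcomp 0 t (Nat.zero_le _) (M k) htk.le ζ]
      exact hζ k hk
  -- ## PointwiseThin
  have hPT : PointwiseThin (Q 0 m '' E) := by
    intro z hz
    have hzJ : z ∈ Q 0 m '' E := hz
    obtain ⟨ζ, hζE, hζ⟩ := hz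
    have hζE' := (hEchar ζ).mp hζE
    obtain ⟨hζle, hζge⟩ := hOrb ζ hζE'
    -- the flipped point
    obtain ⟨x₀, hx₀E, hx₀⟩ := hflip ζ hζE' (m+1)
    have hw₀J : Q 0 m x₀ ∈ Q 0 m '' E := ⟨x₀, hx₀E, rfl⟩
    have hw₀ne : Q 0 m x₀ ≠ z := by
      intro heq
      have h1 : Q 0 (m+1) x₀ = Q 0 (m+1) ζ := by
        rw [← hcomp 0 m (Nat.zero_le _) (m+1) (by omega) x₀,
            ← hcomp 0 m (Nat.zero_le _) (m+1) (by omega) ζ, heq, hζ]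
      rw [hx₀] at h1
      have h2 : Q 0 (m+1) ζ = 0 := by linear_combination (-(1/2):ℂ) * h1
      have h3 := hζge (m+1)
      rw [h2] at h3
      simp at h3
      linarith
    have hwz : (0:ℝ) < ‖Q 0 m x₀ - z‖ :=
      norm_pos_iff.mpr (sub_ne_zero.mpr hw₀ne)
    obtain ⟨J₀, hJ₀⟩ : ∃ J₀ : ℕ, (1/2:ℝ)^J₀ < ‖Q 0 m x₀ - z‖ :=
      exists_pow_lt_of_lt_one hwz (by norm_num)
    have Hi : ∀ i : ℕ, ∃ r R : ℝ, 0 < r ∧ r < R ∧ R ≤ (1/2:ℝ)^(i + J₀ + 1) ∧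
        (i:ℝ) ≤ R / r ∧
        ∀ w ∈ Q 0 m '' E, ‖w - z‖ < R → ‖w - z‖ ≤ r := by
      intro i
      set K : ℕ := m + i + J₀ + 1 with hK
      have hne : (Finset.range (K+1)).Nonempty := ⟨0, by simp⟩
      obtain ⟨k, hk1, hkc⟩ := hub (max (400 + 112*(i:ℝ))
        ((Finset.range (K+1)).sup' hne (fun j => ‖c j‖)))
      have hkK : K < k := by
        by_contra hle
        push_neg at hle
        have h1 : ‖c k‖
            ≤ (Finset.range (K+1)).sup' hne (fun j => ‖c j‖) :=
          Finset.le_sup' (fun j => ‖c j‖) (Finset.mem_range.mpr (by omega : k < K + 1))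
        have h2 := le_max_right (400 + 112*(i:ℝ))
          ((Finset.range (K+1)).sup' hne (fun j => ‖c j‖))
        linarith
      have hcck : 400 + 112*(i:ℝ) ≤ ‖c k‖ :=
        le_of_lt (lt_of_le_of_lt (le_max_left _ _) hkc)
      obtain ⟨k', hkk'⟩ : ∃ k', k = k' + 1 := ⟨k - 1, by omega⟩
      have hk'K : K ≤ k' := by omega
      set n := M k' with hn
      have hmn' : m + (i + J₀ + 1) ≤ n := by
        have := hM2l k'
        omega
      have hmn : m ≤ n := by omega
      set N := 2^(msq k + 1) with hNdef
      have hN4 : (4:ℝ) ≤ (N:ℝ) := by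
        have h1 : 2 ≤ msq k + 1 := by have := hmsq k hk1; omega
        have h2 : (4:ℕ) ≤ N := by
          calc (4:ℕ) = 2^2 := by norm_num
            _ ≤ 2^(msq k + 1) := Nat.pow_le_pow_right (by norm_num) h1
        exact_mod_cast h2
      have hNpos : (0:ℝ) < N := by linarith
      have hcc400 : (400:ℝ) ≤ ‖c k‖ := by
        have : (0:ℝ) ≤ (i:ℝ) := Nat.cast_nonneg i
        linarith
      have hccpos : (0:ℝ) < ‖c k‖ - 2 := by linarith
      have hZn1 : 1 ≤ ‖Q 0 n ζ‖ := hζge n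
      have hZn2 : ‖Q 0 n ζ‖ ≤ 2 := hζle k'
      have hprek : ∀ x : ℂ, (Q 0 n x)^N = Q 0 (M k) x - c k := by
        intro x
        have h := hpreQ x k'
        rw [← hkk'] at h
        exact h
      have hZN : ‖c k‖ - 2 ≤ ‖Q 0 n ζ‖ ^ N := by
        rw [← norm_pow, hprek ζ]
        have h1 : ‖c k‖
            ≤ ‖Q 0 (M k) ζ‖ + ‖Q 0 (M k) ζ - c k‖ := by
          calc ‖c k‖
              = ‖Q 0 (M k) ζ - (Q 0 (M k) ζ - c k)‖ := by congr 1; ring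
            _ ≤ _ := norm_sub_le _ _
        have h2 := hζE' k hk1
        linarith
      set A := ∏ jj ∈ Finset.Ico m n, (2 * ‖Q 0 jj ζ‖) with hAdef
      have hApos : 0 < A := Finset.prod_pos (fun jj _ => by have := hζge jj; linarith)
      have hA2 : (2:ℝ)^(n - m) ≤ A := by
        calc (2:ℝ)^(n-m) = ∏ _jj ∈ Finset.Ico m n, (2:ℝ) := by
              rw [Finset.prod_const, Nat.card_Ico]
          _ ≤ A := Finset.prod_le_prod (fun jj _ => by norm_num)
              (fun jj _ => by have := hζge jj; nlinarith)
      have hpow2pos : (0:ℝ) < 2^(n-m) := by positivity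
      refine ⟨7 * ‖Q 0 n ζ‖ / ((N * (‖c k‖ - 2)) * A),
        ‖Q 0 n ζ‖ / (16 * N * A), ?_, ?_, ?_, ?_, ?_⟩
      · exact div_pos (by linarith) (mul_pos (mul_pos hNpos hccpos) hApos)
      · rw [div_lt_div_iff₀ (mul_pos (mul_pos hNpos hccpos) hApos)
          (mul_pos (mul_pos (by norm_num) hNpos) hApos)]
        have hZNA : (0:ℝ) < ‖Q 0 n ζ‖ * ((N:ℝ) * A) := by
          apply mul_pos (by linarith) (mul_pos hNpos hApos)
        nlinarith [hZNA, hcc400]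
      · calc ‖Q 0 n ζ‖ / (16 * N * A) ≤ 2 / (16*4*2^(n-m)) := by
              apply div_le_div₀ (by norm_num) hZn2 (by positivity)
              nlinarith [hA2, hN4, hApos, hpow2pos]
          _ ≤ (1/2:ℝ)^(n-m) := by
              rw [div_le_iff₀ (by positivity)]
              have he : ((1/2:ℝ))^(n-m) * 2^(n-m) = 1 := by
                rw [← mul_pow]; norm_num
              nlinarith [he, hpow2pos, pow_nonneg (show (0:ℝ) ≤ 1/2 by norm_num) (n-m)]
          _ ≤ (1/2:ℝ)^(i+J₀+1) := by
              apply pow_le_pow_of_le_one (by norm_num) (by norm_num)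
              omega
      · have heq : (‖Q 0 n ζ‖ / (16 * N * A))
            / (7 * ‖Q 0 n ζ‖ / ((N * (‖c k‖ - 2)) * A))
            = (‖c k‖ - 2)/112 := by
          have hznne : ‖Q 0 n ζ‖ ≠ 0 := by linarith
          have hAne : A ≠ 0 := hApos.ne'
          have hNne : (N:ℝ) ≠ 0 := hNpos.ne'
          field_simp
          ring
        rw [heq, le_div_iff₀ (by norm_num)]
        linarith
      · intro w hw hwR
        obtain ⟨ξ, hξE, hξ⟩ := hw
        have hξE' := (hEchar ξ).mp hξE
        obtain ⟨hξle, hξge⟩ := hOrb ξ hξE'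
        have hdiff : ∀ j, Q 0 (j+1) ξ - Q 0 (j+1) ζ
            = (Q 0 j ξ - Q 0 j ζ) * (Q 0 j ξ + Q 0 j ζ) := by
          intro j
          obtain ⟨d, hd⟩ := hQstep j
          rw [hd 0 ξ (Nat.zero_le _), hd 0 ζ (Nat.zero_le _)]
          ring
        have hVZN : ‖(Q 0 n ξ)^N - (Q 0 n ζ)^N‖ ≤ 4 := by
          rw [hprek ξ, hprek ζ]
          rw [show (Q 0 (M k) ξ - c k) - (Q 0 (M k) ζ - c k)
            = Q 0 (M k) ξ - Q 0 (M k) ζ from by ring]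
          calc ‖Q 0 (M k) ξ - Q 0 (M k) ζ‖
              ≤ ‖Q 0 (M k) ξ‖ + ‖Q 0 (M k) ζ‖ :=
                norm_sub_le _ _
            _ ≤ 4 := by
                have := hξE' k hk1
                have := hζE' k hk1
                linarith
        rw [← hξ, ← hζ] at hwR ⊢
        exact key_lemma (fun j => Q 0 j ζ) (fun j => Q 0 j ξ) m n N (‖c k‖)
          hmn hdiff hζge hZn2 hN4 hcc400 hZN hVZN hwR
    choose r R h1 h2 h3 h4 h5 using Hi
    refine ⟨r, R, fun i => ⟨h1 i, h2 i⟩, ?_, ?_, ?_⟩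
    · have hg : Filter.Tendsto (fun i : ℕ => (1/2:ℝ)^i) Filter.atTop (nhds 0) :=
        tendsto_pow_atTop_nhds_zero_of_lt_one (by norm_num) (by norm_num)
      apply squeeze_zero (g := fun i : ℕ => (1/2:ℝ)^i) (fun i => ((h1 i).trans (h2 i)).le)
        (fun i => le_trans (h3 i)
          (pow_le_pow_of_le_one (by norm_num) (by norm_num) (by omega))) hg
    · exact tendsto_atTop_mono h4 tendsto_natCast_atTop_atTop
    · intro i
      refine ⟨?_, ⟨z, hzJ, ?_⟩, ⟨Q 0 m x₀, hw₀J, ?_⟩⟩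
      · intro w hw hcon
        obtain ⟨ha, hb⟩ := hcon
        have := h5 i w hw hb
        linarith
      · rw [sub_self, norm_zero]
        exact (h1 i).le
      · have h6 : ((1:ℝ)/2)^(i+J₀+1) ≤ (1/2:ℝ)^J₀ :=
          pow_le_pow_of_le_one (by norm_num) (by norm_num) (by omega)
        linarith [h3 i, hJ₀]
  -- ## HNUP
  have hHN : HNUP (Q 0 m '' E) := by
    intro F hFsub _hFc hF2 C hC
    obtain ⟨a, ha, b, hb, hab⟩ := hF2
    obtain ⟨r, R, hrR, hR0, hRr, hsep⟩ := hPT a (hFsub ha)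
    have hba : (0:ℝ) < ‖b - a‖ :=
      norm_pos_iff.mpr (sub_ne_zero.mpr (Ne.symm hab))
    have hev1 : ∀ᶠ i in atTop, R i < ‖b - a‖ := hR0.eventually_lt_const hba
    have hev2 : ∀ᶠ i in atTop, Real.exp C < R i / r i := hRr.eventually_gt_atTop _
    obtain ⟨i, hi1, hi2⟩ := (hev1.and hev2).exists
    have hrpos := (hrR i).1
    have hrlt := (hrR i).2
    have hratpos : 0 < R i / r i := div_pos (by linarith) hrpos
    have hsF : SeparatesAnnulus F a (r i) (R i) := by
      refine ⟨fun w hw => (hsep i).1 w (hFsub hw), ⟨a, ha, ?_⟩, ⟨b, hb, hi1.le⟩⟩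
      rw [sub_self, norm_zero]
      exact hrpos.le
    exact ⟨a, r i, R i, hrpos, hrlt, (Real.lt_log_iff_exp_lt hratpos).mpr hi2, hsF⟩
  exact ⟨hPT, hHN⟩
end

section
/- Every pointwise thin compact set E ⊂ ℂ is hereditarily non uniformly perfect: for every compact subset F ⊆ E containing at least two points, there is no finite upper bound on the moduli of round annuli separating F; that is, for every C > 0 there exist z ∈ ℂ and 0 < r < R with log(R/r) > C such that {w : r < |w − z| < R} is disjoint from F while F meets both D̄(z,r) and {w : |w − z| ≥ R}. -/
open Complex Metric Set Filter

/-- Every pointwise thin compact set E ⊂ ℂ is hereditarily non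
uniformly perfect: no compact subset F ⊆ E with at least two points admits a
finite upper bound on the moduli of round annuli separating F. -/
theorem stmt_17
    (E : Set ℂ) (hEc : IsCompact E) (hpt : PointwiseThin E) :
    ∀ F ⊆ E, IsCompact F → (∃ a ∈ F, ∃ b ∈ F, a ≠ b) →
      ∀ C > 0, ∃ (z : ℂ) (r R : ℝ), 0 < r ∧ r < R ∧ C < Real.log (R / r) ∧
        SeparatesAnnulus F z r R := by
  intro F hFE hFc ⟨a, ha, b, hb, hab⟩ C hC
  obtain ⟨r, R, hrR, hR0, hRr, hsep⟩ := hpt a (hFE ha)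
  have hd : 0 < ‖b - a‖ := by
    simpa [sub_eq_zero] using (norm_pos_iff.mpr (sub_ne_zero.mpr hab.symm))
  -- eventually R n < |b - a|
  have h1 : ∀ᶠ n in atTop, R n < ‖b - a‖ :=
    hR0.eventually_lt_const hd
  have h2 : ∀ᶠ n in atTop, C < Real.log (R n / r n) :=
    (Real.tendsto_log_atTop.comp hRr).eventually_gt_atTop C
  obtain ⟨n, hn1, hn2⟩ := (h1.and h2).exists
  refine ⟨a, r n, R n, (hrR n).1, (hrR n).2, hn2, ?_⟩
  obtain ⟨hdisj, -, -⟩ := hsep n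
  refine ⟨fun w hw => hdisj w (hFE hw), ⟨a, ha, ?_⟩, ⟨b, hb, le_of_lt hn1⟩⟩
  simp [le_of_lt (hrR n).1]
end
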